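/- Key Lemma (local lattice form): let (g, S) be a local lattice Lie algebra over a field F and set B(a,b) := ∑_{n∈ℤ} ⁅Sⁿa, b⁆ (a finite sum). Then for all a, b, c ∈ g: (1) B(S(a) − a, b) = 0; (2) B(a, S(b) − b) ∈ (S − id)(g); (3) B(a,b) + B(b,a) ∈ (S − id)(g); (4) B(a, S(b)) = S(B(a,b)); (5) B(a, B(b,c)) − B(b, B(a,c)) = B(B(a,b), c). Consequently B induces a well-defined Lie algebra bracket {∫a, ∫b} := ∫B(a,b) on the quotient g/(S − id)(g), and a representation of this Lie algebra on g commuting with S. -/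

import Mathlib

/-- For a lattice Lie algebra `(g, S)`, the (finite, by locality) sum
`B(a,b) = ∑_{n∈ℤ} ⁅Sⁿa, b⁆`. -/
noncomputable def latticeB {F : Type*} [Field F] {g : Type*} [LieRing g] [LieAlgebra F g]
    (S : g ≃ₗ[F] g) (a b : g) : g :=
  ∑ᶠ n : ℤ, ⁅(S ^ n) a, b⁆

section Aux
variable {F : Type*} [Field F] {g : Type*} [LieRing g] [LieAlgebra F g] (S : g ≃ₗ[F] g)

lemma zpow_apply_add (m n : ℤ) (x : g) : (S ^ (m + n)) x = (S ^ m) ((S ^ n) x) := by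
  rw [zpow_add]; rfl

lemma zpow_succ_apply (m : ℤ) (x : g) : (S ^ (m + 1)) x = S ((S ^ m) x) := by
  rw [add_comm, zpow_apply_add]; norm_num

lemma hSz (hS : ∀ a b : g, S ⁅a, b⁆ = ⁅S a, S b⁆) :
    ∀ (n : ℤ) (a b : g), (S ^ n) ⁅a, b⁆ = ⁅(S ^ n) a, (S ^ n) b⁆ := by
  have he : ∀ x : g, S (S⁻¹ x) = x := fun x => S.apply_symm_apply x
  have hinv : ∀ a b : g, S⁻¹ ⁅a, b⁆ = ⁅S⁻¹ a, S⁻¹ b⁆ := by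
    intro a b
    apply S.injective
    show S (S⁻¹ ⁅a, b⁆) = S ⁅S⁻¹ a, S⁻¹ b⁆
    rw [he, hS, he, he]
  intro n
  induction n using Int.induction_on with
  | zero => simp
  | succ k ih =>
      intro a b
      rw [zpow_succ_apply, zpow_succ_apply, zpow_succ_apply, ih, hS]
  | pred k ih =>
      intro a b
      have h1 : ∀ x : g, (S ^ (-(k:ℤ) - 1)) x = S⁻¹ ((S ^ (-(k:ℤ))) x) := by
        intro x
        have h2 : (-(k:ℤ) - 1) = (-1) + (-(k:ℤ)) := by ring
        rw [h2, zpow_apply_add, zpow_neg_one]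
      rw [h1, h1, h1, ih, hinv]

lemma supp_finite (hloc : ∀ a b : g, {n : ℤ | ⁅(S ^ n) a, b⁆ ≠ 0}.Finite) (a b : g) :
    (Function.support fun n : ℤ => ⁅(S ^ n) a, b⁆).Finite := hloc a b

lemma latticeB_shift (hloc : ∀ a b : g, {n : ℤ | ⁅(S ^ n) a, b⁆ ≠ 0}.Finite)
    (a b : g) (k : ℤ) : latticeB S ((S ^ k) a) b = latticeB S a b := by
  unfold latticeB
  have : ∀ n : ℤ, ⁅(S ^ n) ((S ^ k) a), b⁆ = ⁅(S ^ (n + k)) a, b⁆ := by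
    intro n; rw [zpow_apply_add]
  simp only [this]
  exact finsum_comp (g := fun n : ℤ => ⁅(S ^ n) a, b⁆) (fun n => n + k) (Equiv.addRight k).bijective

lemma latticeB_sub_left (hloc : ∀ a b : g, {n : ℤ | ⁅(S ^ n) a, b⁆ ≠ 0}.Finite)
    (x y b : g) : latticeB S (x - y) b = latticeB S x b - latticeB S y b := by
  unfold latticeB
  rw [← finsum_sub_distrib (supp_finite S hloc x b) (supp_finite S hloc y b)]
  congr 1; funext n; rw [map_sub, sub_lie]

lemma latticeB_S_right (hS : ∀ a b : g, S ⁅a, b⁆ = ⁅S a, S b⁆)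
    (hloc : ∀ a b : g, {n : ℤ | ⁅(S ^ n) a, b⁆ ≠ 0}.Finite)
    (a b : g) : latticeB S a (S b) = S (latticeB S a b) := by
  unfold latticeB
  have key : ∀ n : ℤ, ⁅(S ^ n) a, S b⁆ = S ⁅(S ^ (n - 1)) a, b⁆ := by
    intro n
    rw [hS, ← zpow_succ_apply]
    norm_num
  simp only [key]
  rw [show S (∑ᶠ n : ℤ, ⁅(S ^ n) a, b⁆) = ∑ᶠ n : ℤ, S ⁅(S ^ n) a, b⁆ from
    AddMonoidHom.map_finsum (S.toLinearMap.toAddMonoidHom) (supp_finite S hloc a b)]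
  show ∑ᶠ n : ℤ, (fun m : ℤ => S ⁅(S ^ m) a, b⁆) (n - 1) = _
  rw [finsum_comp (g := fun m : ℤ => S ⁅(S ^ m) a, b⁆) (fun n => n - 1)
    (Equiv.subRight (1:ℤ)).bijective]

lemma exists_telescope (m : ℤ) (c : g) : ∃ x : g, S x - x = c - (S ^ m) c := by
  induction m using Int.induction_on with
  | zero => exact ⟨0, by simp⟩
  | succ k ih =>
      obtain ⟨x, hx⟩ := ih
      refine ⟨x - (S ^ (k:ℤ)) c, ?_⟩
      rw [map_sub, zpow_succ_apply,
        show S x - S ((S ^ (k:ℤ)) c) - (x - (S ^ (k:ℤ)) c)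
          = (S x - x) - (S ((S ^ (k:ℤ)) c) - (S ^ (k:ℤ)) c) by abel, hx]
      abel
  | pred k ih =>
      obtain ⟨x, hx⟩ := ih
      refine ⟨x + (S ^ (-(k:ℤ) - 1)) c, ?_⟩
      have h2 : S ((S ^ (-(k:ℤ) - 1)) c) = (S ^ (-(k:ℤ))) c := by
        rw [← zpow_succ_apply]; norm_num
      rw [map_add, h2]
      rw [show S x + (S ^ (-(k:ℤ))) c - (x + (S ^ (-(k:ℤ) - 1)) c)
        = (S x - x) + ((S ^ (-(k:ℤ))) c - (S ^ (-(k:ℤ) - 1)) c) by abel, hx]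
      abel

lemma part3 (hS : ∀ a b : g, S ⁅a, b⁆ = ⁅S a, S b⁆)
    (hloc : ∀ a b : g, {n : ℤ | ⁅(S ^ n) a, b⁆ ≠ 0}.Finite)
    (a b : g) : ∃ x : g, S x - x = latticeB S a b + latticeB S b a := by
  set L : g →ₗ[F] g := S.toLinearMap - LinearMap.id with hL
  have hLapp : ∀ x : g, L x = S x - x := fun x => rfl
  set c : ℤ → g := fun m => ⁅(S ^ (-m)) a, b⁆ with hc
  have sc : (Function.support c).Finite := by
    have : Function.support c ⊆ Neg.neg ⁻¹' (Function.support fun n : ℤ => ⁅(S ^ n) a, b⁆) := by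
      intro m hm; exact hm
    exact Set.Finite.subset ((supp_finite S hloc a b).preimage ((Equiv.neg ℤ).injective.injOn)) this
  have h1 : latticeB S a b = ∑ᶠ m : ℤ, c m :=
    (finsum_comp (g := fun n : ℤ => ⁅(S ^ n) a, b⁆) (fun m : ℤ => -m) (Equiv.neg ℤ).bijective).symm
  have h2 : ∀ m : ℤ, ⁅(S ^ m) b, a⁆ = -(S ^ m) (c m) := by
    intro m
    have e1 : (S ^ m) ((S ^ (-m)) a) = a := by
      rw [← zpow_apply_add]; simp
    rw [hc]
    show ⁅(S ^ m) b, a⁆ = -(S ^ m) ⁅(S ^ (-m)) a, b⁆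
    rw [hSz S hS m, e1, ← lie_skew]
  have h3 : latticeB S b a = ∑ᶠ m : ℤ, -(S ^ m) (c m) := by
    unfold latticeB; simp only [h2]
  have sc2 : (Function.support fun m : ℤ => -(S ^ m) (c m)).Finite := by
    apply Set.Finite.subset sc
    intro m hm
    simp only [Function.mem_support] at hm ⊢
    intro h; apply hm; rw [h]; simp
  have h4 : latticeB S a b + latticeB S b a = ∑ᶠ m : ℤ, (c m - (S ^ m) (c m)) := by
    rw [h1, h3, ← finsum_add_distrib sc sc2]
    congr 1; funext m; rw [sub_eq_add_neg]
  have hsupp : (Function.support fun m : ℤ => c m - (S ^ m) (c m)) ⊆ ↑sc.toFinset := by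
    intro m hm
    simp only [Set.Finite.coe_toFinset, Function.mem_support] at hm ⊢
    intro h; apply hm; rw [h]; simp
  have h5 : latticeB S a b + latticeB S b a = ∑ m ∈ sc.toFinset, (c m - (S ^ m) (c m)) := by
    rw [h4, finsum_eq_finset_sum_of_support_subset _ hsupp]
  have hmem : latticeB S a b + latticeB S b a ∈ LinearMap.range L := by
    rw [h5]
    apply Submodule.sum_mem
    intro m _
    obtain ⟨x, hx⟩ := exists_telescope S m (c m)
    exact ⟨x, by rw [hLapp, hx]⟩
  obtain ⟨x, hx⟩ := hmem
  exact ⟨x, by rw [← hLapp, hx]⟩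

lemma part5 (hS : ∀ a b : g, S ⁅a, b⁆ = ⁅S a, S b⁆)
    (hloc : ∀ a b : g, {n : ℤ | ⁅(S ^ n) a, b⁆ ≠ 0}.Finite)
    (a b c : g) :
    latticeB S a (latticeB S b c) - latticeB S b (latticeB S a c)
      = latticeB S (latticeB S a b) c := by
  classical
  set V : Finset ℤ := (hloc b c).toFinset ∪ (hloc b (latticeB S a c)).toFinset ∪
      (hloc (latticeB S a b) c).toFinset with hV
  set U : Finset ℤ := (hloc a (latticeB S b c)).toFinset ∪ (hloc a c).toFinset ∪
      V.biUnion (fun k => (hloc a b).toFinset.image (· + k)) with hU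
  have hBbc : latticeB S b c = ∑ m ∈ V, ⁅(S ^ m) b, c⁆ := by
    apply finsum_eq_finset_sum_of_support_subset
    intro m hm
    simp only [hV, Finset.coe_union, Set.Finite.coe_toFinset]
    exact Or.inl (Or.inl hm)
  have hBac : latticeB S a c = ∑ n ∈ U, ⁅(S ^ n) a, c⁆ := by
    apply finsum_eq_finset_sum_of_support_subset
    intro n hn
    simp only [hU, Finset.coe_union, Set.Finite.coe_toFinset]
    exact Or.inl (Or.inr hn)
  have hA : latticeB S a (latticeB S b c)
      = ∑ n ∈ U, ∑ m ∈ V, ⁅(S ^ n) a, ⁅(S ^ m) b, c⁆⁆ := by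
    have s1 : latticeB S a (latticeB S b c) = ∑ n ∈ U, ⁅(S ^ n) a, latticeB S b c⁆ := by
      apply finsum_eq_finset_sum_of_support_subset
      intro n hn
      simp only [hU, Finset.coe_union, Set.Finite.coe_toFinset]
      exact Or.inl (Or.inl hn)
    rw [s1]
    refine Finset.sum_congr rfl fun n _ => ?_
    rw [hBbc]
    exact map_sum (AddMonoidHom.mk' (fun y => ⁅(S ^ n) a, y⁆) (lie_add ((S ^ n) a))) _ _
  have hB : latticeB S b (latticeB S a c)
      = ∑ m ∈ V, ∑ n ∈ U, ⁅(S ^ m) b, ⁅(S ^ n) a, c⁆⁆ := by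
    have s1 : latticeB S b (latticeB S a c) = ∑ m ∈ V, ⁅(S ^ m) b, latticeB S a c⁆ := by
      apply finsum_eq_finset_sum_of_support_subset
      intro m hm
      simp only [hV, Finset.coe_union, Set.Finite.coe_toFinset]
      exact Or.inl (Or.inr hm)
    rw [s1]
    refine Finset.sum_congr rfl fun m _ => ?_
    rw [hBac]
    exact map_sum (AddMonoidHom.mk' (fun y => ⁅(S ^ m) b, y⁆) (lie_add ((S ^ m) b))) _ _
  have hC : latticeB S (latticeB S a b) c
      = ∑ m ∈ V, ∑ n ∈ U, ⁅⁅(S ^ n) a, (S ^ m) b⁆, c⁆ := by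
    have s1 : latticeB S (latticeB S a b) c
        = ∑ k ∈ V, ⁅(S ^ k) (latticeB S a b), c⁆ := by
      apply finsum_eq_finset_sum_of_support_subset
      intro k hk
      simp only [hV, Finset.coe_union, Set.Finite.coe_toFinset]
      exact Or.inr hk
    rw [s1]
    refine Finset.sum_congr rfl fun k hk => ?_
    -- ⁅(S^k) (B a b), c⁆ = ∑ n in U, ⁅⁅S^n a, S^k b⁆, c⁆
    set R : g →+ g := AddMonoidHom.mk' (fun x => ⁅x, c⁆) (fun x y => add_lie x y c) with hR
    have e1 : (S ^ k) (latticeB S a b) = ∑ᶠ n : ℤ, (S ^ k) ⁅(S ^ n) a, b⁆ :=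
      AddMonoidHom.map_finsum ((S ^ k).toLinearMap.toAddMonoidHom) (supp_finite S hloc a b)
    have sfin : (Function.support fun n : ℤ => (S ^ k) ⁅(S ^ n) a, b⁆).Finite := by
      apply Set.Finite.subset (supp_finite S hloc a b)
      intro n hn
      simp only [Function.mem_support] at hn ⊢
      intro h; apply hn; rw [h]; simp
    have e2 : ⁅(S ^ k) (latticeB S a b), c⁆ = ∑ᶠ n : ℤ, ⁅(S ^ k) ⁅(S ^ n) a, b⁆, c⁆ := by
      rw [e1]
      exact AddMonoidHom.map_finsum R sfin
    have e3 : ∀ n : ℤ, (S ^ k) ⁅(S ^ n) a, b⁆ = ⁅(S ^ (n + k)) a, (S ^ k) b⁆ := by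
      intro n
      rw [hSz S hS k, ← zpow_apply_add, add_comm]
    rw [e2]
    simp only [e3]
    rw [show (∑ᶠ n : ℤ, ⁅⁅(S ^ (n + k)) a, (S ^ k) b⁆, c⁆)
        = ∑ᶠ n : ℤ, ⁅⁅(S ^ n) a, (S ^ k) b⁆, c⁆ from
      finsum_comp (g := fun n : ℤ => ⁅⁅(S ^ n) a, (S ^ k) b⁆, c⁆) (fun n => n + k)
        (Equiv.addRight k).bijective]
    apply finsum_eq_finset_sum_of_support_subset
    intro n hn
    have hn' : ⁅(S ^ (n - k)) a, b⁆ ≠ 0 := by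
      intro h
      apply hn
      have : (S ^ k) ⁅(S ^ (n - k)) a, b⁆ = ⁅(S ^ n) a, (S ^ k) b⁆ := by
        rw [hSz S hS k, ← zpow_apply_add]
        congr 2
        ring
      show ⁅⁅(S ^ n) a, (S ^ k) b⁆, c⁆ = 0
      rw [← this, h]
      simp
    simp only [hU, Finset.coe_union]
    right
    simp only [Finset.coe_biUnion, Set.mem_iUnion]
    refine ⟨k, hk, ?_⟩
    simp only [Finset.coe_image, Set.mem_image, Set.Finite.coe_toFinset]
    exact ⟨n - k, hn', by ring⟩
  rw [hA, hB, hC, Finset.sum_comm (s := V) (t := U), Finset.sum_comm (s := V) (t := U),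
    ← Finset.sum_sub_distrib]
  refine Finset.sum_congr rfl fun n _ => ?_
  rw [← Finset.sum_sub_distrib]
  refine Finset.sum_congr rfl fun m _ => ?_
  rw [lie_lie]

end Aux

/-- Key Lemma (local lattice form).  For a local lattice Lie algebra `(g,S)`
and `B(a,b) = ∑_n ⁅Sⁿa,b⁆`:
(1) `B(S(a) − a, b) = 0`; (2) `B(a, S(b) − b) ∈ (S − id)(g)`;
(3) `B(a,b) + B(b,a) ∈ (S − id)(g)`; (4) `B(a, S(b)) = S(B(a,b))`;
(5) `B(a, B(b,c)) − B(b, B(a,c)) = B(B(a,b), c)`.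
(Consequently `B` induces a Lie bracket on `g/(S−id)(g)` and a representation on `g`
commuting with `S`.) -/
theorem stmt_8 (F : Type*) [Field F] (g : Type*) [LieRing g] [LieAlgebra F g]
    (S : g ≃ₗ[F] g) (hS : ∀ a b : g, S ⁅a, b⁆ = ⁅S a, S b⁆)
    (hloc : ∀ a b : g, {n : ℤ | ⁅(S ^ n) a, b⁆ ≠ 0}.Finite) :
    (∀ a b : g, latticeB S (S a - a) b = 0)
    ∧ (∀ a b : g, ∃ x : g, S x - x = latticeB S a (S b - b))
    ∧ (∀ a b : g, ∃ x : g, S x - x = latticeB S a b + latticeB S b a)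
    ∧ (∀ a b : g, latticeB S a (S b) = S (latticeB S a b))
    ∧ (∀ a b c : g,
        latticeB S a (latticeB S b c) - latticeB S b (latticeB S a c)
          = latticeB S (latticeB S a b) c) := by
  refine ⟨?_, ?_, ?_, ?_, part5 S hS hloc⟩
  · intro a b
    have h1 : S a = (S ^ (1:ℤ)) a := by rw [zpow_one]
    rw [h1, latticeB_sub_left S hloc, latticeB_shift S hloc, sub_self]
  · intro a b
    refine ⟨latticeB S a b, ?_⟩
    have h1 : latticeB S a (S b - b) = latticeB S a (S b) - latticeB S a b := by
      unfold latticeB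
      rw [← finsum_sub_distrib (supp_finite S hloc a (S b)) (supp_finite S hloc a b)]
      congr 1; funext n; rw [lie_sub]
    rw [h1, latticeB_S_right S hS hloc]
  · exact part3 S hS hloc
  · exact latticeB_S_right S hS hloc
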